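/- Let p > 0 with p ≠ 1, and let y₁ > 0 and y₂ = p · y₁ satisfy y₁ · ln y₁ = y₂ · ln y₂. Then y₁ = p^{p/(1−p)} and y₂ = p^{1/(1−p)}. -/

import Mathlib

/-- Let `p > 0`, `p ≠ 1`, and let `y₁ > 0` and `y₂ = p·y₁` satisfy
`y₁ · ln y₁ = y₂ · ln y₂`. Then `y₁ = p^(p/(1-p))` and `y₂ = p^(1/(1-p))`. -/
theorem two_cycle_values
    (p y₁ y₂ : ℝ) (hp : 0 < p) (hp1 : p ≠ 1) (hy₁ : 0 < y₁)
    (hrel : y₂ = p * y₁) (hcycle : y₁ * Real.log y₁ = y₂ * Real.log y₂) :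
    y₁ = p ^ (p / (1 - p)) ∧ y₂ = p ^ (1 / (1 - p)) := by
  have hp0 : p ≠ 0 := ne_of_gt hp
  have hy0 : y₁ ≠ 0 := ne_of_gt hy₁
  have h1p : (1 : ℝ) - p ≠ 0 := sub_ne_zero.mpr (Ne.symm hp1)
  rw [hrel, Real.log_mul hp0 hy0] at hcycle
  have hlog : Real.log y₁ = Real.log p * (p / (1 - p)) := by
    field_simp
    nlinarith [hcycle]
  have hy1 : y₁ = p ^ (p / (1 - p)) := by
    rw [Real.rpow_def_of_pos hp, ← hlog, Real.exp_log hy₁]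
  refine ⟨hy1, ?_⟩
  have : (1 : ℝ) / (1 - p) = 1 + p / (1 - p) := by field_simp; ring
  rw [hrel, hy1, this, Real.rpow_add hp, Real.rpow_one]
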